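/- Let μ ≤ 1 be a real number and define P_1(x) = (1 + √(1−μ))/2 + (5/3)x. Then ∫_{−1}^{1} P_1(y) P_1((3/20)μy + xy)·(3/2)y² dy = P_1(x) for all real x. The same identity holds with P_1(x) = (1 − √(1−μ))/2 + (5/3)x. -/

import Mathlib

open MeasureTheory Set

lemma example_two_key (c d x : ℝ) :
    (∫ y in Ioo (-1 : ℝ) 1,
      (c + 5 / 3 * y) * (c + 5 / 3 * (d * y + x * y)) * ((3 / 2) * y ^ 2))
      = c ^ 2 + 5 / 3 * (d + x) := by
  have hIoo : (∫ y in Ioo (-1 : ℝ) 1,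
      (c + 5 / 3 * y) * (c + 5 / 3 * (d * y + x * y)) * ((3 / 2) * y ^ 2))
      = ∫ y in (-1 : ℝ)..1,
      (c + 5 / 3 * y) * (c + 5 / 3 * (d * y + x * y)) * ((3 / 2) * y ^ 2) := by
    rw [intervalIntegral.integral_of_le (by norm_num), ← integral_Ioc_eq_integral_Ioo]
  rw [hIoo]
  set k : ℝ := 5 / 3 * (d + x) with hk
  have hderiv : ∀ y ∈ uIcc (-1 : ℝ) 1,
      HasDerivAt (fun y : ℝ => (1/2) * c ^ 2 * y ^ 3 + (3/8) * c * (k + 5/3) * y ^ 4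
        + (1/2) * k * y ^ 5)
        ((c + 5 / 3 * y) * (c + 5 / 3 * (d * y + x * y)) * ((3 / 2) * y ^ 2)) y := by
    intro y _
    have h3 : HasDerivAt (fun y : ℝ => y ^ 3) (3 * y ^ 2) y := by
      simpa using hasDerivAt_pow 3 y
    have h4 : HasDerivAt (fun y : ℝ => y ^ 4) (4 * y ^ 3) y := by
      simpa using hasDerivAt_pow 4 y
    have h5 : HasDerivAt (fun y : ℝ => y ^ 5) (5 * y ^ 4) y := by
      simpa using hasDerivAt_pow 5 y
    have := ((h3.const_mul ((1:ℝ)/2 * c ^ 2)).add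
      (h4.const_mul ((3:ℝ)/8 * c * (k + 5/3)))).add (h5.const_mul ((1:ℝ)/2 * k))
    convert this using 1
    · rfl
    · rfl
    · rfl
    · simp only [hk]; ring
  have hcont : IntervalIntegrable
      (fun y => (c + 5 / 3 * y) * (c + 5 / 3 * (d * y + x * y)) * ((3 / 2) * y ^ 2))
      volume (-1 : ℝ) 1 := by
    apply Continuous.intervalIntegrable; continuity
  rw [intervalIntegral.integral_eq_sub_of_hasDerivAt hderiv hcont]
  simp only [hk]; ring

/-- Example 2 of Dominici: with `ω(y) = (3/2)y²` on `(-1,1)`, `α(y) = (3/20)μy`, `β(y) = y`,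
both `P₁(x) = (1 ± √(1-μ))/2 + (5/3)x` solve
`∫_{-1}^1 P₁(y) P₁((3/20)μy + xy) (3/2)y² dy = P₁(x)`. -/
theorem example_two (μ : ℝ) (hμ : μ ≤ 1) (P Q : ℝ → ℝ)
    (hP : ∀ x, P x = (1 + Real.sqrt (1 - μ)) / 2 + (5 / 3) * x)
    (hQ : ∀ x, Q x = (1 - Real.sqrt (1 - μ)) / 2 + (5 / 3) * x) :
    (∀ x : ℝ,
      (∫ y in Ioo (-1 : ℝ) 1,
        P y * P ((3 / 20) * μ * y + x * y) * ((3 / 2) * y ^ 2)) = P x) ∧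
    (∀ x : ℝ,
      (∫ y in Ioo (-1 : ℝ) 1,
        Q y * Q ((3 / 20) * μ * y + x * y) * ((3 / 2) * y ^ 2)) = Q x) := by
  have hs : Real.sqrt (1 - μ) ^ 2 = 1 - μ := Real.sq_sqrt (by linarith)
  constructor
  · intro x
    simp only [hP]
    rw [show (∫ y in Ioo (-1 : ℝ) 1,
        ((1 + Real.sqrt (1 - μ)) / 2 + 5 / 3 * y) *
          ((1 + Real.sqrt (1 - μ)) / 2 + 5 / 3 * ((3 / 20) * μ * y + x * y)) *
          ((3 / 2) * y ^ 2))
        = ∫ y in Ioo (-1 : ℝ) 1,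
        ((1 + Real.sqrt (1 - μ)) / 2 + 5 / 3 * y) *
          ((1 + Real.sqrt (1 - μ)) / 2 + 5 / 3 * ((3 / 20 * μ) * y + x * y)) *
          ((3 / 2) * y ^ 2) from by norm_num,
      example_two_key ((1 + Real.sqrt (1 - μ)) / 2) (3 / 20 * μ) x]
    nlinarith [hs]
  · intro x
    simp only [hQ]
    rw [show (∫ y in Ioo (-1 : ℝ) 1,
        ((1 - Real.sqrt (1 - μ)) / 2 + 5 / 3 * y) *
          ((1 - Real.sqrt (1 - μ)) / 2 + 5 / 3 * ((3 / 20) * μ * y + x * y)) *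
          ((3 / 2) * y ^ 2))
        = ∫ y in Ioo (-1 : ℝ) 1,
        ((1 - Real.sqrt (1 - μ)) / 2 + 5 / 3 * y) *
          ((1 - Real.sqrt (1 - μ)) / 2 + 5 / 3 * ((3 / 20 * μ) * y + x * y)) *
          ((3 / 2) * y ^ 2) from by norm_num,
      example_two_key ((1 - Real.sqrt (1 - μ)) / 2) (3 / 20 * μ) x]
    nlinarith [hs]
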